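/- Let Ω_i ⊆ ℝ^{n_i} be nonempty closed convex sets with Ω = ∏_{i=1}^N Ω_i ⊆ ℝ^n, F : ℝ^n → ℝ^n a map, A_i ∈ ℝ^{m×n_i}, A = [A_1, …, A_N], b_i ∈ ℝ^m, b = Σ_i b_i, b̄ = col(b_1,…,b_N), L ∈ ℝ^{N×N} symmetric positive semidefinite with L·1_N = 0 and kernel exactly span{1_N}, L̄ = L ⊗ I_m, Λ = diag(A_1, …, A_N). Define Ā(x, z̄, λ̄) = (F(x), 0, L̄λ̄ − b̄) and B̄(x, z̄, λ̄) = N_Ω(x) × {0} × N_{(ℝ₊^m)^N}(λ̄) + (−Λᵀλ̄, −L̄λ̄, Λx + L̄z̄). If there exist x* ∈ Ω and λ* ∈ ℝ₊^m satisfying the KKT conditions 0 ∈ F(x*) − Aᵀλ* + N_Ω(x*) and 0 ∈ Ax* − b + N_{ℝ₊^m}(λ*), then there exists z̄* ∈ ℝ^{mN} such that 0 ∈ Ā(x*, z̄*, 1_N ⊗ λ*) + B̄(x*, z̄*, 1_N ⊗ λ*); in particular the zero set of Ā + B̄ is nonempty. -/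

import Mathlib

open scoped RealInnerProductSpace Pointwise Matrix

noncomputable section

/-- The normal cone of a set `Ω` at a point `x` (empty when `x ∉ Ω`). -/
def normalCone {E : Type*} [NormedAddCommGroup E] [InnerProductSpace ℝ E]
    (Ω : Set E) (x : E) : Set E :=
  {v | x ∈ Ω ∧ ∀ y ∈ Ω, ⟪v, y - x⟫ ≤ 0}

open Matrix

lemma key_exists_mulVec (N : ℕ) (L : Matrix (Fin N) (Fin N) ℝ)
    (hLsymm : L.IsSymm)
    (hLone : L.mulVec (fun _ => (1 : ℝ)) = 0)
    (hLker : ∀ v : Fin N → ℝ, L.mulVec v = 0 → ∃ c : ℝ, v = fun _ => c)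
    (v : Fin N → ℝ) (hv : ∑ i, v i = 0) : ∃ z, L.mulVec z = v := by
  rcases Nat.eq_zero_or_pos N with hN | hN
  · subst hN
    exact ⟨0, funext fun i => i.elim0⟩
  · set T := L.mulVecLin with hT
    have hker : LinearMap.ker T = Submodule.span ℝ {(fun _ => (1:ℝ) : Fin N → ℝ)} := by
      apply le_antisymm
      · intro u hu
        obtain ⟨c, rfl⟩ := hLker u hu
        have h1 : (fun _ : Fin N => c) = c • (fun _ : Fin N => (1:ℝ)) := by
          funext j; simp
        rw [h1]
        exact Submodule.smul_mem _ _ (Submodule.mem_span_singleton_self _)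
      · rw [Submodule.span_singleton_le_iff_mem]
        exact LinearMap.mem_ker.mpr hLone
    let f : (Fin N → ℝ) →ₗ[ℝ] ℝ := ∑ i, LinearMap.proj i
    have hf : ∀ u : Fin N → ℝ, f u = ∑ i, u i := by
      intro u; simp [f]
    have hfsurj : Function.Surjective f := by
      intro r
      refine ⟨Pi.single ⟨0, hN⟩ r, ?_⟩
      rw [hf]
      simp [Pi.single_apply]
    have hrange_le : LinearMap.range T ≤ LinearMap.ker f := by
      rintro u ⟨z, rfl⟩
      rw [LinearMap.mem_ker, hf]
      have : ∑ i, (T z) i = (fun _ => (1:ℝ)) ⬝ᵥ L.mulVec z := by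
        simp [dotProduct, hT]
      rw [this, Matrix.dotProduct_mulVec]
      have hvm : L.vecMul (fun _ => (1:ℝ)) = 0 := by
        rw [← Matrix.mulVec_transpose, hLsymm.eq, hLone]
      rw [hvm]
      simp
    have hdim1 : Module.finrank ℝ (LinearMap.range T) + 1 = N := by
      have h1 := LinearMap.finrank_range_add_finrank_ker T
      have h2 : Module.finrank ℝ (LinearMap.ker T) = 1 := by
        rw [hker]
        apply finrank_span_singleton
        intro h0
        have := congrFun h0 ⟨0, hN⟩
        simp at this
      rw [h2] at h1
      simpa using h1
    have hdim2 : Module.finrank ℝ (LinearMap.ker f) + 1 = N := by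
      have h1 := LinearMap.finrank_range_add_finrank_ker f
      have h2 : LinearMap.range f = ⊤ := LinearMap.range_eq_top.mpr hfsurj
      rw [h2] at h1
      simp at h1
      omega
    have heq : LinearMap.range T = LinearMap.ker f :=
      Submodule.eq_of_le_of_finrank_le hrange_le (by omega)
    have hvmem : v ∈ LinearMap.range T := by
      rw [heq, LinearMap.mem_ker, hf]; exact hv
    obtain ⟨z, hz⟩ := hvmem
    exact ⟨z, hz⟩

/-- Any pair `(x*, λ*)` satisfying the KKT conditions of `VI(F, X)` gives
rise to a zero of the augmented operators: there exists `z̄*` with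
`0 ∈ Ā(x*, z̄*, 1_N ⊗ λ*) + B̄(x*, z̄*, 1_N ⊗ λ*)`; in particular `zer(Ā + B̄) ≠ ∅`. -/
theorem KKT_gives_zero_of_augmented_operators
    (N m : ℕ) (n : Fin N → ℕ)
    (Ω : ∀ i : Fin N, Set (EuclideanSpace ℝ (Fin (n i))))
    (hΩne : ∀ i, (Ω i).Nonempty) (hΩcl : ∀ i, IsClosed (Ω i)) (hΩcv : ∀ i, Convex ℝ (Ω i))
    (F : PiLp 2 (fun i : Fin N => EuclideanSpace ℝ (Fin (n i))) →
      PiLp 2 (fun i : Fin N => EuclideanSpace ℝ (Fin (n i))))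
    (A : ∀ i : Fin N, EuclideanSpace ℝ (Fin (n i)) →ₗ[ℝ] EuclideanSpace ℝ (Fin m))
    (b : Fin N → EuclideanSpace ℝ (Fin m))
    (L : Matrix (Fin N) (Fin N) ℝ)
    (hLsymm : L.IsSymm)
    (hLpsd : ∀ v : Fin N → ℝ, 0 ≤ v ⬝ᵥ L.mulVec v)
    (hLone : L.mulVec (fun _ => (1 : ℝ)) = 0)
    (hLker : ∀ v : Fin N → ℝ, L.mulVec v = 0 → ∃ c : ℝ, v = fun _ => c)
    -- `L̄ = L ⊗ I_m` acting on `ℝ^{mN}`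
    (Lbar : PiLp 2 (fun _ : Fin N => EuclideanSpace ℝ (Fin m)) →
      PiLp 2 (fun _ : Fin N => EuclideanSpace ℝ (Fin m)))
    (hLbar : ∀ lam i, Lbar lam i = ∑ j, L i j • lam j)
    -- `Λ = diag(A_1, …, A_N)` and its transpose
    (Λ : PiLp 2 (fun i : Fin N => EuclideanSpace ℝ (Fin (n i))) →
      PiLp 2 (fun _ : Fin N => EuclideanSpace ℝ (Fin m)))
    (hΛ : ∀ x i, Λ x i = A i (x i))
    (Λadj : PiLp 2 (fun _ : Fin N => EuclideanSpace ℝ (Fin m)) →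
      PiLp 2 (fun i : Fin N => EuclideanSpace ℝ (Fin (n i))))
    (hΛadj : ∀ lam i, Λadj lam i = LinearMap.adjoint (A i) (lam i))
    (bbar : PiLp 2 (fun _ : Fin N => EuclideanSpace ℝ (Fin m)))
    (hbbar : ∀ i, bbar i = b i)
    -- `Aᵀ = col(A_1ᵀ, …, A_Nᵀ)`, the transpose of `A = [A_1, …, A_N]`
    (Aadj : EuclideanSpace ℝ (Fin m) →
      PiLp 2 (fun i : Fin N => EuclideanSpace ℝ (Fin (n i))))
    (hAadj : ∀ lam i, Aadj lam i = LinearMap.adjoint (A i) lam)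
    -- the operators `Ā` and `B̄`
    (Abar : PiLp 2 (fun i : Fin N => EuclideanSpace ℝ (Fin (n i))) ×
        PiLp 2 (fun _ : Fin N => EuclideanSpace ℝ (Fin m)) ×
        PiLp 2 (fun _ : Fin N => EuclideanSpace ℝ (Fin m)) →
      PiLp 2 (fun i : Fin N => EuclideanSpace ℝ (Fin (n i))) ×
        PiLp 2 (fun _ : Fin N => EuclideanSpace ℝ (Fin m)) ×
        PiLp 2 (fun _ : Fin N => EuclideanSpace ℝ (Fin m)))
    (hAbar : ∀ p, Abar p = (F p.1, 0, Lbar p.2.2 - bbar))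
    (Bbar : PiLp 2 (fun i : Fin N => EuclideanSpace ℝ (Fin (n i))) ×
        PiLp 2 (fun _ : Fin N => EuclideanSpace ℝ (Fin m)) ×
        PiLp 2 (fun _ : Fin N => EuclideanSpace ℝ (Fin m)) →
      Set (PiLp 2 (fun i : Fin N => EuclideanSpace ℝ (Fin (n i))) ×
        PiLp 2 (fun _ : Fin N => EuclideanSpace ℝ (Fin m)) ×
        PiLp 2 (fun _ : Fin N => EuclideanSpace ℝ (Fin m))))
    (hBbar : ∀ p, Bbar p =
      (normalCone {x : PiLp 2 (fun i : Fin N => EuclideanSpace ℝ (Fin (n i))) |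
            ∀ i, x i ∈ Ω i} p.1 ×ˢ
          (({0} : Set (PiLp 2 (fun _ : Fin N => EuclideanSpace ℝ (Fin m)))) ×ˢ
            normalCone {lam : PiLp 2 (fun _ : Fin N => EuclideanSpace ℝ (Fin m)) |
              ∀ i k, 0 ≤ lam i k} p.2.2)) +
        {(-Λadj p.2.2, -Lbar p.2.2, Λ p.1 + Lbar p.2.1)})
    -- a pair `(x*, λ*)` satisfying the KKT conditions
    (xstar : PiLp 2 (fun i : Fin N => EuclideanSpace ℝ (Fin (n i))))
    (hxstar : ∀ i, xstar i ∈ Ω i)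
    (lam : EuclideanSpace ℝ (Fin m))
    (hlam : ∀ k, 0 ≤ lam k)
    (hKKT1 : (0 : PiLp 2 (fun i : Fin N => EuclideanSpace ℝ (Fin (n i)))) ∈
      ({F xstar - Aadj lam} :
        Set (PiLp 2 (fun i : Fin N => EuclideanSpace ℝ (Fin (n i))))) +
        normalCone {x : PiLp 2 (fun i : Fin N => EuclideanSpace ℝ (Fin (n i))) |
          ∀ i, x i ∈ Ω i} xstar)
    (hKKT2 : (0 : EuclideanSpace ℝ (Fin m)) ∈
      ({(∑ i, A i (xstar i)) - ∑ i, b i} : Set (EuclideanSpace ℝ (Fin m))) +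
        normalCone {v : EuclideanSpace ℝ (Fin m) | ∀ k, 0 ≤ v k} lam)
    -- `1_N ⊗ λ*`, the stacked vector with all blocks equal to `λ*`
    (lamtile : PiLp 2 (fun _ : Fin N => EuclideanSpace ℝ (Fin m)))
    (hlamtile : ∀ i, lamtile i = lam) :
    ∃ zbar : PiLp 2 (fun _ : Fin N => EuclideanSpace ℝ (Fin m)),
      (0 : PiLp 2 (fun i : Fin N => EuclideanSpace ℝ (Fin (n i))) ×
          PiLp 2 (fun _ : Fin N => EuclideanSpace ℝ (Fin m)) ×
          PiLp 2 (fun _ : Fin N => EuclideanSpace ℝ (Fin m))) ∈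
        ({Abar (xstar, zbar, lamtile)} : Set _) + Bbar (xstar, zbar, lamtile) := by
  classical
  -- unpack KKT conditions
  rw [Set.mem_add] at hKKT1 hKKT2
  obtain ⟨a1, ha1, g, hg, hag⟩ := hKKT1
  obtain ⟨a2, ha2, h, hh, hah⟩ := hKKT2
  rw [Set.mem_singleton_iff] at ha1 ha2
  subst ha1; subst ha2
  -- h = ∑ b - ∑ A x
  have hheq : h = (∑ i, b i) - ∑ i, A i (xstar i) := by
    have h2 : h - ((∑ i, b i) - ∑ i, A i (xstar i)) =
        ∑ i, A i (xstar i) - ∑ i, b i + h := by abel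
    rw [hah] at h2
    exact sub_eq_zero.mp h2
  -- the normal cone element in the λ-block
  set w : PiLp 2 (fun _ : Fin N => EuclideanSpace ℝ (Fin m)) :=
    WithLp.toLp 2 (fun _ => (N : ℝ)⁻¹ • h) with hwdef
  -- key sum identity per coordinate
  have hsum : ∀ k : Fin m,
      ∑ i, (b i k - A i (xstar i) k - (N : ℝ)⁻¹ * h k) = 0 := by
    intro k
    rcases Nat.eq_zero_or_pos N with hN | hN
    · have he : (Finset.univ : Finset (Fin N)) = ∅ := by
        apply Finset.univ_eq_empty_iff.mpr
        rw [hN]; infer_instance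
      rw [he]; simp
    · have hNne : (N : ℝ) ≠ 0 := Nat.cast_ne_zero.mpr (by omega)
      have hhk : h k = (∑ i, b i) k - (∑ i, A i (xstar i)) k := by
        rw [hheq]; rfl
      have hbk : (∑ i, b i) k = ∑ i, b i k := by
        rw [WithLp.ofLp_sum]; exact Finset.sum_apply k Finset.univ _
      have hAk : (∑ i, A i (xstar i)) k = ∑ i, A i (xstar i) k := by
        rw [WithLp.ofLp_sum]; exact Finset.sum_apply k Finset.univ _
      rw [Finset.sum_sub_distrib, Finset.sum_sub_distrib, ← hbk, ← hAk]
      rw [Finset.sum_const, Finset.card_univ, Fintype.card_fin, nsmul_eq_mul,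
        ← mul_assoc, mul_inv_cancel₀ hNne, one_mul, hhk]
      ring
  -- solve L z_k = c_k for each coordinate
  have hzk : ∀ k : Fin m, ∃ z : Fin N → ℝ,
      L.mulVec z = fun i => b i k - A i (xstar i) k - (N : ℝ)⁻¹ * h k :=
    fun k => key_exists_mulVec N L hLsymm hLone hLker _ (hsum k)
  choose zfun hzfun using hzk
  refine ⟨(WithLp.toLp 2 (fun i => (WithLp.toLp 2 (fun k => zfun k i) : EuclideanSpace ℝ (Fin m))) :
    PiLp 2 (fun _ : Fin N => EuclideanSpace ℝ (Fin m))), ?_⟩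
  set zbar : PiLp 2 (fun _ : Fin N => EuclideanSpace ℝ (Fin m)) :=
    (WithLp.toLp 2 (fun i => (WithLp.toLp 2 (fun k => zfun k i) : EuclideanSpace ℝ (Fin m)))) with hzbar
  -- basic computations
  have hLbarlam : Lbar lamtile = 0 := by
    refine PiLp.ext fun i => ?_
    rw [hLbar]
    have : ∀ j, L i j • lamtile j = L i j • lam := by
      intro j; rw [hlamtile]
    rw [Finset.sum_congr rfl (fun j _ => this j), ← Finset.sum_smul]
    have h0 : ∑ j, L i j = 0 := by
      have := congrFun hLone i
      simpa [Matrix.mulVec, dotProduct] using this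
    rw [h0, zero_smul]
    rfl
  have hΛadjlam : Λadj lamtile = Aadj lam := by
    refine PiLp.ext fun i => ?_
    rw [hΛadj, hlamtile, hAadj]
  have hLbarz : ∀ i, Lbar zbar i = WithLp.toLp 2 (fun k =>
      b i k - A i (xstar i) k - (N : ℝ)⁻¹ * h k) := by
    intro i
    rw [hLbar]
    refine PiLp.ext fun k => ?_
    have hs : (∑ j, L i j • zbar j) k = ∑ j, (L i j • zbar j) k := by
      rw [WithLp.ofLp_sum]; exact Finset.sum_apply k Finset.univ _
    rw [hs]
    have : ∀ j, (L i j • zbar j) k = L i j * zfun k j := by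
      intro j; rfl
    rw [Finset.sum_congr rfl (fun j _ => this j)]
    have := congrFun (hzfun k) i
    simpa [Matrix.mulVec, dotProduct] using this
  -- membership of w in the normal cone of the nonnegative orthant product
  have hwmem : w ∈ normalCone
      {lam' : PiLp 2 (fun _ : Fin N => EuclideanSpace ℝ (Fin m)) |
        ∀ i k, 0 ≤ lam' i k} lamtile := by
    constructor
    · intro i k; rw [hlamtile]; exact hlam k
    · intro y hy
      rw [PiLp.inner_apply]
      apply Finset.sum_nonpos
      intro i _
      have h1 : (y - lamtile) i = y i - lam := by
        rw [show (y - lamtile) i = y i - lamtile i from rfl, hlamtile]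
      show ⟪w i, (y - lamtile) i⟫ ≤ 0
      rw [h1, hwdef]
      simp only
      rw [real_inner_smul_left]
      have h2 : ⟪h, y i - lam⟫ ≤ 0 := hh.2 (y i) (hy i)
      have h3 : (0:ℝ) ≤ (N : ℝ)⁻¹ := by positivity
      exact mul_nonpos_iff.mpr (Or.inl ⟨h3, h2⟩)
  -- assemble the membership
  rw [hAbar, hBbar]
  rw [Set.mem_add]
  refine ⟨_, Set.mem_singleton _,
    (g, 0, w) + (-Λadj lamtile, -Lbar lamtile, Λ xstar + Lbar zbar),
    Set.add_mem_add (Set.mem_prod.mpr ⟨hg, Set.mem_prod.mpr ⟨rfl, hwmem⟩⟩)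
      (Set.mem_singleton _), ?_⟩
  show (F xstar, (0 : PiLp 2 (fun _ : Fin N => EuclideanSpace ℝ (Fin m))),
      Lbar lamtile - bbar) + ((g, 0, w) + (-Λadj lamtile, -Lbar lamtile,
      Λ xstar + Lbar zbar)) = 0
  rw [Prod.ext_iff, Prod.ext_iff]
  refine ⟨?_, ?_, ?_⟩
  · show F xstar + (g + -Λadj lamtile) = 0
    rw [hΛadjlam]
    have : F xstar + (g + -Aadj lam) = F xstar - Aadj lam + g := by abel
    rw [this, hag]
  · show (0 : PiLp 2 (fun _ : Fin N => EuclideanSpace ℝ (Fin m))) +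
      (0 + -Lbar lamtile) = 0
    rw [hLbarlam]; simp
  · show Lbar lamtile - bbar + (w + (Λ xstar + Lbar zbar)) = 0
    rw [hLbarlam]
    refine PiLp.ext fun i => ?_
    have h1 : ((0 : PiLp 2 (fun _ : Fin N => EuclideanSpace ℝ (Fin m))) - bbar +
        (w + (Λ xstar + Lbar zbar))) i =
        0 - bbar i + (w i + (Λ xstar i + Lbar zbar i)) := rfl
    rw [h1]
    refine PiLp.ext fun k => ?_
    have h2 : (0 - bbar i + (w i + (Λ xstar i + Lbar zbar i))) k =
        0 - bbar i k + (w i k + (Λ xstar i k + Lbar zbar i k)) := rfl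
    rw [h2, hbbar, hΛ]
    have h3 : Lbar zbar i k = b i k - A i (xstar i) k - (N : ℝ)⁻¹ * h k := by
      rw [hLbarz i]
    have h4 : w i k = (N : ℝ)⁻¹ * h k := rfl
    rw [h3, h4]
    show (0:ℝ) - b i k + ((N : ℝ)⁻¹ * h k + (A i (xstar i) k +
      (b i k - A i (xstar i) k - (N : ℝ)⁻¹ * h k))) = 0
    ring


end
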